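/- Assume T_{2n+1} ≤ τ, T_{2n} ≥ τ and T_{2n} > T* for all n ∈ ℕ, and set c_n := M² e^{−2μ T_{2n}}. Then every trajectory U of the on–off delay system with initial datum U₀ satisfies, for every n ∈ ℕ, the iterated estimate ‖U(t_{2n+2})‖² ≤ [ ∏_{k=0}^{n} e^{B_{2k+1} T_{2k+1}} (c_k + 1 − e^{−B_{2k+1} T_{2k+1}}) ] · ‖U₀‖². -/

import Mathlib

open Real Set

lemma stmt_15_step
    {H : Type*} [NormedAddCommGroup H] [InnerProductSpace ℝ H]
    (S : ℝ → H →L[ℝ] H) (M μ : ℝ)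
    (hSbound : ∀ s : ℝ, 0 ≤ s → ‖S s‖ ≤ M * Real.exp (-μ * s))
    (hScontr : ∀ s : ℝ, 0 ≤ s → ∀ x : H, ‖S s x‖ ≤ ‖x‖)
    (t : ℕ → ℝ) (ht0 : t 0 = 0) (htmono : StrictMono t)
    (τ : ℝ)
    (B : ℕ → H →L[ℝ] H)
    (hT2n1τ : ∀ n : ℕ, t (2*n+2) - t (2*n+1) ≤ τ)
    (hT2nτ : ∀ n : ℕ, τ ≤ t (2*n+1) - t (2*n))
    (U : ℝ → H) (V : ℝ → H)
    (hUcont : ContinuousOn U (Set.Ici (0:ℝ)))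
    (hUeven : ∀ n : ℕ, ∀ s ∈ Set.Icc (t (2*n)) (t (2*n+1)),
      U s = S (s - t (2*n)) (U (t (2*n))))
    (hUodd : ∀ n : ℕ, ∀ s ∈ Set.Ioo (t (2*n+1)) (t (2*n+2)),
      HasDerivAt U (V s + B n (U (s - τ))) s)
    (hdiss : ∀ n : ℕ, ∀ s ∈ Set.Ioo (t (2*n+1)) (t (2*n+2)),
      (inner ℝ (U s) (V s) : ℝ) ≤ 0)
    (k : ℕ) :
    ‖U (t (2*k+2))‖^2 ≤
      Real.exp (‖B k‖*(t (2*k+2) - t (2*k+1))) *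
        (M^2 * Real.exp (-2*μ*(t (2*k+1) - t (2*k))) + 1 -
          Real.exp (-‖B k‖*(t (2*k+2) - t (2*k+1)))) * ‖U (t (2*k))‖^2 := by
  have ht_nonneg : ∀ m, 0 ≤ t m := fun m => ht0 ▸ htmono.monotone (Nat.zero_le m)
  set c := t (2*k) with hcdef
  set a := t (2*k+1) with hadef
  set b := t (2*k+2) with hbdef
  have hca : c < a := htmono (by omega)
  have hab : a < b := htmono (by omega)
  have hc0 : (0:ℝ) ≤ c := ht_nonneg _
  have ha0 : (0:ℝ) ≤ a := ht_nonneg _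
  set K := ‖B k‖ with hKdef
  have hK0 : 0 ≤ K := norm_nonneg _
  set C := ‖U c‖^2 with hCdef
  have hC0 : 0 ≤ C := sq_nonneg _
  have hτbc : b - a ≤ τ := hT2n1τ k
  have hτac : τ ≤ a - c := hT2nτ k
  -- value at a
  have hfa : ‖U a‖^2 ≤ M^2 * Real.exp (-2*μ*(a - c)) * C := by
    have hUa : U a = S (a - c) (U c) := hUeven k a ⟨hca.le, le_refl a⟩
    have h1 : ‖U a‖ ≤ (M * Real.exp (-μ*(a-c))) * ‖U c‖ := by
      rw [hUa]
      calc ‖S (a-c) (U c)‖ ≤ ‖S (a-c)‖ * ‖U c‖ := (S (a-c)).le_opNorm _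
        _ ≤ (M * Real.exp (-μ*(a-c))) * ‖U c‖ :=
          mul_le_mul_of_nonneg_right (hSbound _ (by linarith)) (norm_nonneg _)
    have h2 : ‖U a‖^2 ≤ ((M * Real.exp (-μ*(a-c))) * ‖U c‖)^2 :=
      pow_le_pow_left₀ (norm_nonneg _) h1 2
    have h3 : Real.exp (-μ*(a-c)) * Real.exp (-μ*(a-c)) = Real.exp (-2*μ*(a-c)) := by
      rw [← Real.exp_add]; ring_nf
    calc ‖U a‖^2 ≤ ((M * Real.exp (-μ*(a-c))) * ‖U c‖)^2 := h2
      _ = M^2 * (Real.exp (-μ*(a-c)) * Real.exp (-μ*(a-c))) * C := by rw [hCdef]; ring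
      _ = M^2 * Real.exp (-2*μ*(a-c)) * C := by rw [h3]
  -- delayed term bound
  have hdelay : ∀ s ∈ Set.Ioo a b, ‖U (s - τ)‖^2 ≤ C := by
    intro s hs
    have h1 : c ≤ s - τ := by have := hs.1; linarith
    have h2 : s - τ ≤ a := by have := hs.2; linarith
    have hUeq := hUeven k (s - τ) ⟨h1, h2⟩
    have hle : ‖U (s-τ)‖ ≤ ‖U c‖ := by
      rw [hUeq]; exact hScontr _ (by linarith) _
    exact pow_le_pow_left₀ (norm_nonneg _) hle 2
  -- F = inner (U s) (U s)
  set F : ℝ → ℝ := fun s => (inner ℝ (U s) (U s) : ℝ) with hFdef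
  have hFnorm : ∀ s, F s = ‖U s‖^2 := fun s => real_inner_self_eq_norm_sq _
  have hFderiv : ∀ s ∈ Set.Ioo a b,
      HasDerivAt F (2 * (inner ℝ (U s) (V s + B k (U (s - τ))) : ℝ)) s := by
    intro s hs
    have hU' := hUodd k s hs
    have h := HasDerivAt.inner (𝕜 := ℝ) hU' hU'
    refine h.congr_deriv ?_
    rw [real_inner_comm]; ring
  have hFderiv_le : ∀ s ∈ Set.Ioo a b,
      2 * (inner ℝ (U s) (V s + B k (U (s - τ))) : ℝ) ≤ K * (F s + C) := by
    intro s hs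
    have h1 : (inner ℝ (U s) (V s) : ℝ) ≤ 0 := hdiss k s hs
    have h2 : (inner ℝ (U s) (B k (U (s - τ))) : ℝ) ≤ ‖U s‖ * (K * ‖U (s-τ)‖) := by
      calc (inner ℝ (U s) (B k (U (s - τ))) : ℝ) ≤ ‖U s‖ * ‖B k (U (s-τ))‖ :=
            real_inner_le_norm _ _
        _ ≤ ‖U s‖ * (K * ‖U (s-τ)‖) :=
            mul_le_mul_of_nonneg_left ((B k).le_opNorm _) (norm_nonneg _)
    have h3 : ‖U (s - τ)‖^2 ≤ C := hdelay s hs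
    have h4 : 2 * (‖U s‖ * ‖U (s-τ)‖) ≤ ‖U s‖^2 + ‖U (s-τ)‖^2 := by
      nlinarith [sq_nonneg (‖U s‖ - ‖U (s-τ)‖)]
    have h5 : (inner ℝ (U s) (V s + B k (U (s - τ))) : ℝ)
        = (inner ℝ (U s) (V s) : ℝ) + (inner ℝ (U s) (B k (U (s - τ))) : ℝ) :=
      inner_add_right _ _ _
    rw [h5, hFnorm]
    nlinarith [mul_le_mul_of_nonneg_left h3 hK0, mul_le_mul_of_nonneg_left h4 hK0]
  -- g
  set g : ℝ → ℝ := fun s => Real.exp (-K * s) * (F s + C) with hgdef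
  have hgderiv : ∀ s ∈ Set.Ioo a b,
      HasDerivAt g (Real.exp (-K*s) * (-K) * (F s + C)
        + Real.exp (-K*s) * (2 * (inner ℝ (U s) (V s + B k (U (s - τ))) : ℝ))) s := by
    intro s hs
    have he : HasDerivAt (fun s : ℝ => Real.exp (-K * s)) (Real.exp (-K*s) * (-K)) s := by
      simpa using ((hasDerivAt_id s).const_mul (-K)).exp
    have hF' : HasDerivAt (fun s => F s + C)
        (2 * (inner ℝ (U s) (V s + B k (U (s - τ))) : ℝ)) s :=
      (hFderiv s hs).add_const C
    exact he.mul hF'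
  have hUcontIcc : ContinuousOn U (Set.Icc a b) :=
    hUcont.mono (fun x hx => le_trans ha0 hx.1)
  have hgcont : ContinuousOn g (Set.Icc a b) := by
    apply ContinuousOn.mul
    · exact (Real.continuous_exp.comp (continuous_const.mul continuous_id)).continuousOn
    · exact (ContinuousOn.inner hUcontIcc hUcontIcc).add continuousOn_const
  have hganti : AntitoneOn g (Set.Icc a b) := by
    apply antitoneOn_of_deriv_nonpos (convex_Icc a b) hgcont
    · intro x hx
      rw [interior_Icc] at hx
      exact ((hgderiv x hx).differentiableAt).differentiableWithinAt
    · intro x hx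
      rw [interior_Icc] at hx
      rw [(hgderiv x hx).deriv]
      have h1 := hFderiv_le x hx
      have h2 : (0:ℝ) < Real.exp (-K*x) := Real.exp_pos _
      have h3 : 0 ≤ F x := by rw [hFnorm]; positivity
      nlinarith
  have hgba : g b ≤ g a :=
    hganti ⟨le_refl a, hab.le⟩ ⟨hab.le, le_refl b⟩ hab.le
  -- final algebra
  have hE1 : (0:ℝ) < Real.exp (-K*a) := Real.exp_pos _
  have hE2 : (0:ℝ) < Real.exp (-K*b) := Real.exp_pos _
  have hE3 : (0:ℝ) < Real.exp (K*(b-a)) := Real.exp_pos _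
  have hE4 : (0:ℝ) < Real.exp (-K*(b-a)) := Real.exp_pos _
  have hmul1 : Real.exp (K*(b-a)) * Real.exp (-K*b) = Real.exp (-K*a) := by
    rw [← Real.exp_add]; ring_nf
  have hmul2 : Real.exp (K*(b-a)) * Real.exp (-K*(b-a)) = 1 := by
    rw [← Real.exp_add]; ring_nf; exact Real.exp_zero
  have hFb : F b + C ≤ Real.exp (K*(b-a)) * (F a + C) := by
    have h' := mul_le_mul_of_nonneg_left hgba hE3.le
    rw [hgdef] at h'
    simp only at h'
    rw [← mul_assoc, hmul1, mul_left_comm] at h'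
    exact le_of_mul_le_mul_left h' hE1
  have hFaC : F a ≤ M^2 * Real.exp (-2*μ*(a-c)) * C := by rw [hFnorm]; exact hfa
  have hgoal : F b ≤ Real.exp (K*(b-a)) *
      (M^2 * Real.exp (-2*μ*(a-c)) + 1 - Real.exp (-K*(b-a))) * C := by
    nlinarith [mul_le_mul_of_nonneg_left hFaC hE3.le, hmul2]
  calc ‖U b‖^2 = F b := (hFnorm b).symm
    _ ≤ _ := hgoal

theorem stmt_15
    {H : Type*} [NormedAddCommGroup H] [InnerProductSpace ℝ H]
    (S : ℝ → H →L[ℝ] H) (M μ : ℝ)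
    (hM : 1 ≤ M) (hμ : 0 < μ)
    (hS0 : S 0 = ContinuousLinearMap.id ℝ H)
    (hSadd : ∀ s u : ℝ, 0 ≤ s → 0 ≤ u → S (s + u) = (S s).comp (S u))
    (hScont : ∀ x : H, ContinuousOn (fun s => S s x) (Set.Ici (0:ℝ)))
    (hSbound : ∀ s : ℝ, 0 ≤ s → ‖S s‖ ≤ M * Real.exp (-μ * s))
    (hScontr : ∀ s : ℝ, 0 ≤ s → ∀ x : H, ‖S s x‖ ≤ ‖x‖)
    (t : ℕ → ℝ) (ht0 : t 0 = 0) (htmono : StrictMono t)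
    (htlim : Filter.Tendsto t Filter.atTop Filter.atTop)
    (τ : ℝ) (hτ : 0 < τ)
    (B : ℕ → H →L[ℝ] H)
    (hT2n1τ : ∀ n : ℕ, t (2*n+2) - t (2*n+1) ≤ τ)
    (hT2nτ : ∀ n : ℕ, τ ≤ t (2*n+1) - t (2*n))
    (hT2nstar : ∀ n : ℕ, Real.log M / μ < t (2*n+1) - t (2*n))
    (U : ℝ → H) (U₀ : H) (V : ℝ → H)
    (hUcont : ContinuousOn U (Set.Ici (0:ℝ))) (hU0 : U 0 = U₀)
    (hUeven : ∀ n : ℕ, ∀ s ∈ Set.Icc (t (2*n)) (t (2*n+1)),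
      U s = S (s - t (2*n)) (U (t (2*n))))
    (hUodd : ∀ n : ℕ, ∀ s ∈ Set.Ioo (t (2*n+1)) (t (2*n+2)),
      HasDerivAt U (V s + B n (U (s - τ))) s)
    (hdiss : ∀ n : ℕ, ∀ s ∈ Set.Ioo (t (2*n+1)) (t (2*n+2)),
      (inner ℝ (U s) (V s) : ℝ) ≤ 0)
    :
    ∀ n : ℕ,
      ‖U (t (2*n+2))‖^2 ≤
        (∏ k ∈ Finset.range (n+1),
          Real.exp (‖B k‖*(t (2*k+2) - t (2*k+1))) *
            (M^2 * Real.exp (-2*μ*(t (2*k+1) - t (2*k))) + 1 -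
              Real.exp (-‖B k‖*(t (2*k+2) - t (2*k+1))))) *
          ‖U₀‖^2 := by
  have step := fun k => stmt_15_step S M μ hSbound hScontr t ht0 htmono τ B
    hT2n1τ hT2nτ U V hUcont hUeven hUodd hdiss k
  have hfac : ∀ m : ℕ, 0 ≤ Real.exp (‖B m‖*(t (2*m+2) - t (2*m+1))) *
      (M^2 * Real.exp (-2*μ*(t (2*m+1) - t (2*m))) + 1 -
        Real.exp (-‖B m‖*(t (2*m+2) - t (2*m+1)))) := by
    intro m
    have hL : 0 ≤ t (2*m+2) - t (2*m+1) := sub_nonneg.2 (htmono (by omega)).le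
    have h1 : Real.exp (-‖B m‖*(t (2*m+2) - t (2*m+1))) ≤ 1 := by
      rw [Real.exp_le_one_iff]
      nlinarith [norm_nonneg (B m)]
    have h2 : 0 ≤ M^2 * Real.exp (-2*μ*(t (2*m+1) - t (2*m))) := by positivity
    have h3 := Real.exp_pos (‖B m‖*(t (2*m+2) - t (2*m+1)))
    nlinarith
  intro n
  induction n with
  | zero =>
      have h := step 0
      simpa [Finset.prod_range_one, ht0, hU0] using h
  | succ n ih =>
      rw [Finset.prod_range_succ]
      have h := step (n+1)
      have hidx : 2*(n+1) = 2*n+2 := by ring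
      rw [hidx] at h ⊢
      calc ‖U (t (2*n+2+2))‖^2
          ≤ (Real.exp (‖B (n+1)‖*(t (2*n+2+2) - t (2*n+2+1))) *
            (M^2 * Real.exp (-2*μ*(t (2*n+2+1) - t (2*n+2))) + 1 -
              Real.exp (-‖B (n+1)‖*(t (2*n+2+2) - t (2*n+2+1))))) * ‖U (t (2*n+2))‖^2 := h
        _ ≤ (Real.exp (‖B (n+1)‖*(t (2*n+2+2) - t (2*n+2+1))) *
            (M^2 * Real.exp (-2*μ*(t (2*n+2+1) - t (2*n+2))) + 1 -
              Real.exp (-‖B (n+1)‖*(t (2*n+2+2) - t (2*n+2+1))))) *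
            ((∏ k ∈ Finset.range (n+1),
              Real.exp (‖B k‖*(t (2*k+2) - t (2*k+1))) *
                (M^2 * Real.exp (-2*μ*(t (2*k+1) - t (2*k))) + 1 -
                  Real.exp (-‖B k‖*(t (2*k+2) - t (2*k+1))))) * ‖U₀‖^2) := by
            apply mul_le_mul_of_nonneg_left ih
            simpa [hidx] using hfac (n+1)
        _ = _ := by ring
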